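/- Parallel ARMA_K: For k = 1,…,K let y_{t+1}^{(k)} = ψ^{(k)} M y_t^{(k)} + φ^{(k)} x with |ψ^{(k)}| ρ(M) < 1 and ψ^{(k)} ≠ 0. Then the total output y_t = Σ_k y_t^{(k)} converges to Σ_n ( Σ_{k=1}^K r^{(k)}/(μ_n − p^{(k)}) ) ⟨x, φ_n⟩ φ_n, where r^{(k)} = −φ^{(k)}/ψ^{(k)} and p^{(k)} = 1/ψ^{(k)}. -/

import Mathlib

open Filter
open scoped InnerProductSpace ENNReal

/-- A scalar affine recursion `c (t+1) = a * c t + b` with `‖a‖ < 1` converges to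
`b / (1 - a)`. -/
lemma arma_scalar_tendsto (a b : ℂ) (ha : ‖a‖ < 1) (c : ℕ → ℂ)
    (hc : ∀ t, c (t + 1) = a * c t + b) :
    Tendsto c atTop (nhds (b / (1 - a))) := by
  have hne : (1 : ℂ) - a ≠ 0 := by
    intro h
    rw [sub_eq_zero] at h
    rw [← h] at ha
    simp at ha
  set L := b / (1 - a) with hL
  have hfix : a * L + b = L := by
    have h := div_mul_cancel₀ b hne
    rw [hL]
    linear_combination -h
  have key : ∀ t, c t = L + a ^ t * (c 0 - L) := by
    intro t
    induction t with
    | zero => simp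
    | succ t ih =>
      rw [hc, ih]
      linear_combination hfix
  have h0 : Tendsto (fun t : ℕ => a ^ t) atTop (nhds 0) :=
    tendsto_pow_atTop_nhds_zero_of_norm_lt_one ha
  have h1 : Tendsto (fun t : ℕ => L + a ^ t * (c 0 - L)) atTop (nhds L) := by
    simpa using (h0.mul_const (c 0 - L)).const_add L
  exact h1.congr fun t => (key t).symm

/-- Parallel ARMA_K: running `K` stable ARMA₁ recursions
`y^{(k)}_{t+1} = ψ^{(k)} M y^{(k)}_t + φ^{(k)} x` in parallel (arbitrary initial
conditions), the total output `∑ k, y^{(k)}_t` converges to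
`∑ n (∑ k r^{(k)}/(μ n − p^{(k)})) ⟨x, φ n⟩ φ n` with `r^{(k)} = −φ^{(k)}/ψ^{(k)}`,
`p^{(k)} = 1/ψ^{(k)}`. -/
theorem armaK_parallel {N K : ℕ} (M : Matrix (Fin N) (Fin N) ℝ) (hM : M.IsSymm)
    (μ : Fin N → ℝ) (v : Fin N → EuclideanSpace ℂ (Fin N)) (hortho : Orthonormal ℂ v)
    (heig : ∀ n, (Matrix.toEuclideanCLM (𝕜 := ℂ) (M.map Complex.ofReal)) (v n) =
      (μ n : ℂ) • v n)
    (ψ φ : Fin K → ℂ) (hψ : ∀ k, ψ k ≠ 0)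
    (hstab : ∀ k, (‖ψ k‖₊ : ℝ≥0∞) * spectralRadius ℂ (M.map Complex.ofReal) < 1)
    (x : EuclideanSpace ℂ (Fin N)) (y : Fin K → ℕ → EuclideanSpace ℂ (Fin N))
    (hy : ∀ k t, y k (t + 1) =
      ψ k • (Matrix.toEuclideanCLM (𝕜 := ℂ) (M.map Complex.ofReal)) (y k t) + φ k • x) :
    Tendsto (fun t => ∑ k, y k t) atTop (nhds
      (∑ n, (∑ k, (-(φ k) / ψ k) / ((μ n : ℂ) - 1 / ψ k)) • ⟪v n, x⟫_ℂ • v n)) := by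
  set A := Matrix.toEuclideanCLM (𝕜 := ℂ) (M.map Complex.ofReal) with hA
  -- the matrix is Hermitian, hence `A` is self-adjoint
  have hherm : (M.map (Complex.ofReal)).IsHermitian := by
    ext i j
    simp [Matrix.conjTranspose_apply, Matrix.map_apply, hM.apply i j]
  have hsa : IsSelfAdjoint A := by
    rw [IsSelfAdjoint, hA, ← map_star]
    congr 1
  -- inner products against eigenvectors
  have hinner : ∀ n (u : EuclideanSpace ℂ (Fin N)),
      ⟪v n, A u⟫_ℂ = (μ n : ℂ) * ⟪v n, u⟫_ℂ := by
    intro n u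
    have h1 : ⟪v n, A u⟫_ℂ = ⟪A (v n), u⟫_ℂ := by
      rw [← ContinuousLinearMap.adjoint_inner_left]
      congr 1
      rw [← ContinuousLinearMap.star_eq_adjoint, hsa]
    rw [h1, heig n, inner_smul_left, Complex.conj_ofReal]
  -- each μ n is in the spectrum of A
  have hspec : ∀ n, (μ n : ℂ) ∈ spectrum ℂ A := by
    intro n
    rw [spectrum.mem_iff]
    intro hunit
    obtain ⟨u, hu⟩ := hunit
    have happ : (algebraMap ℂ (EuclideanSpace ℂ (Fin N) →L[ℂ] EuclideanSpace ℂ (Fin N))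
        (μ n) - A) (v n) = 0 := by
      rw [ContinuousLinearMap.sub_apply, heig n, Algebra.algebraMap_eq_smul_one,
        ContinuousLinearMap.smul_apply, ContinuousLinearMap.one_apply, sub_self]
    have : v n = 0 := by
      have h2 : (↑u⁻¹ : EuclideanSpace ℂ (Fin N) →L[ℂ] EuclideanSpace ℂ (Fin N))
          (((algebraMap ℂ (EuclideanSpace ℂ (Fin N) →L[ℂ] EuclideanSpace ℂ (Fin N)))
            (μ n) - A) (v n)) = 0 := by
        rw [happ, map_zero]
      have h3 : (↑u⁻¹ : EuclideanSpace ℂ (Fin N) →L[ℂ] EuclideanSpace ℂ (Fin N))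
          ((↑u : EuclideanSpace ℂ (Fin N) →L[ℂ] EuclideanSpace ℂ (Fin N)) (v n)) = v n := by
        rw [← ContinuousLinearMap.mul_apply, u.inv_mul, ContinuousLinearMap.one_apply]
      rw [← h3, hu]
      exact h2
    exact hortho.ne_zero n this
  -- ‖ψ k * μ n‖ < 1
  have hlt1 : ∀ k n, ‖ψ k * (μ n : ℂ)‖ < 1 := by
    intro k n
    have hmem : (μ n : ℂ) ∈ spectrum ℂ (M.map Complex.ofReal) := by
      have := hspec n
      rwa [hA, AlgEquiv.spectrum_eq (Matrix.toEuclideanCLM (n := Fin N) (𝕜 := ℂ))] at this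
    have hle : (‖(μ n : ℂ)‖₊ : ℝ≥0∞) ≤ spectralRadius ℂ (M.map Complex.ofReal) :=
      le_iSup₂ (f := fun k (_ : k ∈ spectrum ℂ (M.map Complex.ofReal)) => (‖k‖₊ : ℝ≥0∞))
        (μ n : ℂ) hmem
    have h2 : (‖ψ k‖₊ * ‖(μ n : ℂ)‖₊ : ℝ≥0∞) < 1 :=
      lt_of_le_of_lt (mul_le_mul_right hle _) (hstab k)
    have h3 : (‖ψ k * (μ n : ℂ)‖₊ : ℝ≥0∞) < 1 := by
      rwa [nnnorm_mul, ENNReal.coe_mul]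
    have h4 : ‖ψ k * (μ n : ℂ)‖₊ < 1 := by
      exact_mod_cast h3
    exact_mod_cast h4
  have hone : ∀ k n, (1 : ℂ) - ψ k * (μ n : ℂ) ≠ 0 := by
    intro k n h
    rw [sub_eq_zero] at h
    have := hlt1 k n
    rw [← h] at this
    simp at this
  -- coordinates converge
  have hcoord : ∀ k n, Tendsto (fun t => ⟪v n, y k t⟫_ℂ) atTop
      (nhds ((φ k * ⟪v n, x⟫_ℂ) / (1 - ψ k * (μ n : ℂ)))) := by
    intro k n
    apply arma_scalar_tendsto _ _ (hlt1 k n)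
    intro t
    rw [hy k t, inner_add_right, inner_smul_right, inner_smul_right, hinner n]
    ring
  -- identify the limit values
  have hval : ∀ k n, (φ k * ⟪v n, x⟫_ℂ) / (1 - ψ k * (μ n : ℂ)) =
      ((-(φ k) / ψ k) / ((μ n : ℂ) - 1 / ψ k)) * ⟪v n, x⟫_ℂ := by
    intro k n
    have hd : (μ n : ℂ) - 1 / ψ k ≠ 0 := by
      intro h
      rw [sub_eq_zero] at h
      apply hone k n
      rw [h, mul_one_div, div_self (hψ k), sub_self]
    rw [div_mul_eq_mul_div, div_eq_div_iff (hone k n) hd]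
    field_simp [hψ k]
    ring
  -- handle the degenerate case N = 0
  rcases Nat.eq_zero_or_pos N with hN | hN
  · subst hN
    haveI : Subsingleton (EuclideanSpace ℂ (Fin 0)) := by
      constructor
      intro a b
      ext i
      exact absurd i.2 (by omega)
    have hz : ∀ z : EuclideanSpace ℂ (Fin 0), z = 0 := fun z => Subsingleton.elim z 0
    have : (fun t => ∑ k, y k t) = fun _ => 0 := by
      funext t
      exact hz _
    rw [this, hz (∑ n, (∑ k, (-(φ k) / ψ k) / ((μ n : ℂ) - 1 / ψ k)) • ⟪v n, x⟫_ℂ • v n)]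
    exact tendsto_const_nhds
  -- orthonormal basis expansion
  haveI : Nonempty (Fin N) := ⟨⟨0, hN⟩⟩
  have hcard : Fintype.card (Fin N) = Module.finrank ℂ (EuclideanSpace ℂ (Fin N)) := by
    simp [finrank_euclideanSpace]
  let bb : Module.Basis (Fin N) ℂ (EuclideanSpace ℂ (Fin N)) :=
    basisOfOrthonormalOfCardEqFinrank hortho hcard
  have hbb : ⇑bb = v := coe_basisOfOrthonormalOfCardEqFinrank hortho hcard
  let ob : OrthonormalBasis (Fin N) ℂ (EuclideanSpace ℂ (Fin N)) :=
    bb.toOrthonormalBasis (by rwa [hbb])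
  have hob : ⇑ob = v := by
    rw [Module.Basis.coe_toOrthonormalBasis, hbb]
  have hexp : ∀ u : EuclideanSpace ℂ (Fin N), ∑ n, ⟪v n, u⟫_ℂ • v n = u := by
    intro u
    have := ob.sum_repr' u
    rwa [hob] at this
  -- rewrite the goal
  have hgoal : (∑ n, (∑ k, (-(φ k) / ψ k) / ((μ n : ℂ) - 1 / ψ k)) • ⟪v n, x⟫_ℂ • v n) =
      ∑ k, ∑ n, (((-(φ k) / ψ k) / ((μ n : ℂ) - 1 / ψ k)) * ⟪v n, x⟫_ℂ) • v n := by
    rw [Finset.sum_comm]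
    congr 1
    funext n
    rw [Finset.sum_smul]
    congr 1
    funext k
    rw [smul_smul]
  rw [hgoal]
  have hfun : (fun t => ∑ k, y k t) = fun t => ∑ k, ∑ n, ⟪v n, y k t⟫_ℂ • v n := by
    funext t
    congr 1
    funext k
    exact (hexp (y k t)).symm
  rw [hfun]
  apply tendsto_finset_sum
  intro k _
  apply tendsto_finset_sum
  intro n _
  have := (hcoord k n).smul_const (v n)
  rwa [hval k n] at this
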